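/- The solution Y(T) of 1 = U₁ ∫_ε^{ħω_D} (1/√(ξ² + Y)) tanh(√(ξ² + Y)/(2T)) dξ is strictly decreasing in T on (0, τ₁): if 0 < T₁ < T₂ < τ₁ then Y(T₁) > Y(T₂). -/

import Mathlib

open Real

private lemma myHasDerivAt_tanh (x : ℝ) :
    HasDerivAt Real.tanh (1 / Real.cosh x ^ 2) x := by
  have h := (Real.hasDerivAt_sinh x).div (Real.hasDerivAt_cosh x)
    (ne_of_gt (Real.cosh_pos x))
  have heq : (Real.cosh x * Real.cosh x - Real.sinh x * Real.sinh x) / Real.cosh x ^ 2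
      = 1 / Real.cosh x ^ 2 := by
    have h1 := Real.cosh_sq_sub_sinh_sq x
    have : Real.cosh x * Real.cosh x - Real.sinh x * Real.sinh x = 1 := by nlinarith
    rw [this]
  have hfun : (Real.sinh / Real.cosh) = Real.tanh := by
    funext y; rw [Pi.div_apply, Real.tanh_eq_sinh_div_cosh]
  rw [heq, hfun] at h
  exact h

private lemma tanh_strictMono : StrictMono Real.tanh := by
  apply strictMono_of_deriv_pos
  intro x
  rw [(myHasDerivAt_tanh x).deriv]
  positivity

private lemma continuous_tanh' : Continuous Real.tanh :=
  Differentiable.continuous (fun x => (myHasDerivAt_tanh x).differentiableAt)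

/-- tanh x / x is strictly antitone on (0, ∞). -/
private lemma tanh_div_strictAntiOn :
    StrictAntiOn (fun x => Real.tanh x / x) (Set.Ioi 0) := by
  apply strictAntiOn_of_deriv_neg (convex_Ioi 0)
  · exact continuous_tanh'.continuousOn.div continuousOn_id
      (fun x hx => ne_of_gt hx)
  · intro x hx
    rw [interior_Ioi] at hx
    have hx0 : (0:ℝ) < x := hx
    have hd : HasDerivAt (fun y => Real.tanh y / y)
        ((1 / Real.cosh x ^ 2 * x - Real.tanh x * 1) / x ^ 2) x :=
      (myHasDerivAt_tanh x).div (hasDerivAt_id x) (ne_of_gt hx0)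
    rw [hd.deriv]
    apply div_neg_of_neg_of_pos _ (by positivity)
    have hc : (0:ℝ) < Real.cosh x := Real.cosh_pos x
    have hs : x < Real.sinh x := (Real.self_lt_sinh_iff).mpr hx0
    have hc1 : (1:ℝ) ≤ Real.cosh x := Real.one_le_cosh x
    rw [Real.tanh_eq_sinh_div_cosh]
    rw [div_mul_eq_mul_div, mul_one, div_sub_div _ _ (by positivity) (ne_of_gt hc)]
    apply div_neg_of_neg_of_pos _ (by positivity)
    have hsx : 0 < Real.sinh x := lt_trans hx0 hs
    nlinarith [mul_pos hc hsx]

/-- Key pointwise inequality. -/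
private lemma key_ineq {s₁ s₂ t₁ t₂ : ℝ} (hs₁ : 0 < s₁) (h12 : s₁ ≤ s₂)
    (ht₁ : 0 < t₁) (htt : t₁ < t₂) :
    Real.tanh (s₂ / (2 * t₂)) / s₂ < Real.tanh (s₁ / (2 * t₁)) / s₁ := by
  have hs₂ : 0 < s₂ := lt_of_lt_of_le hs₁ h12
  have ht₂ : 0 < t₂ := lt_trans ht₁ htt
  have step1 : Real.tanh (s₂ / (2 * t₂)) / s₂ < Real.tanh (s₂ / (2 * t₁)) / s₂ := by
    apply div_lt_div_of_pos_right _ hs₂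
    exact tanh_strictMono (by apply div_lt_div_of_pos_left hs₂ (by linarith) (by linarith))
  have step2 : Real.tanh (s₂ / (2 * t₁)) / s₂ ≤ Real.tanh (s₁ / (2 * t₁)) / s₁ := by
    have hx₁ : s₁ / (2 * t₁) ∈ Set.Ioi (0:ℝ) := Set.mem_Ioi.mpr (by positivity)
    have hx₂ : s₂ / (2 * t₁) ∈ Set.Ioi (0:ℝ) := Set.mem_Ioi.mpr (by positivity)
    have hg : Real.tanh (s₂ / (2 * t₁)) / (s₂ / (2 * t₁))
        ≤ Real.tanh (s₁ / (2 * t₁)) / (s₁ / (2 * t₁)) := by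
      rcases eq_or_lt_of_le h12 with h | h
      · rw [h]
      · exact le_of_lt (tanh_div_strictAntiOn hx₁ hx₂
          (by apply div_lt_div_of_pos_right h (by positivity)))
    rw [div_div_eq_mul_div, div_div_eq_mul_div, mul_div_right_comm,
      mul_div_right_comm] at hg
    exact le_of_mul_le_mul_right hg (by positivity)
  exact step1.trans_le step2

/-- The solution Y(T) of the simple gap equation is strictly decreasing in T on (0, τ₁). -/
theorem stmt6 (U₁ ε ω τ₁ : ℝ) (hU : 0 < U₁) (hε : 0 < ε) (hεω : ε < ω)
    (hτ₁ : 0 < τ₁)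
    (hτ : 1 = U₁ * ∫ ξ in ε..ω, (1 / ξ) * Real.tanh (ξ / (2 * τ₁)))
    (Y : ℝ → ℝ)
    (hY : ∀ T ∈ Set.Ioo 0 τ₁, 0 ≤ Y T ∧
      1 = U₁ * ∫ ξ in ε..ω,
        (1 / Real.sqrt (ξ ^ 2 + Y T)) * Real.tanh (Real.sqrt (ξ ^ 2 + Y T) / (2 * T))) :
    ∀ T₁ ∈ Set.Ioo 0 τ₁, ∀ T₂ ∈ Set.Ioo 0 τ₁, T₁ < T₂ → Y T₁ > Y T₂ := by
  intro T₁ hT₁ T₂ hT₂ hTT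
  by_contra hcon
  push_neg at hcon
  obtain ⟨hY₁nn, hEq₁⟩ := hY T₁ hT₁
  obtain ⟨hY₂nn, hEq₂⟩ := hY T₂ hT₂
  set f₁ : ℝ → ℝ := fun ξ =>
    (1 / Real.sqrt (ξ ^ 2 + Y T₁)) * Real.tanh (Real.sqrt (ξ ^ 2 + Y T₁) / (2 * T₁)) with hf₁
  set f₂ : ℝ → ℝ := fun ξ =>
    (1 / Real.sqrt (ξ ^ 2 + Y T₂)) * Real.tanh (Real.sqrt (ξ ^ 2 + Y T₂) / (2 * T₂)) with hf₂
  have hT₁pos : 0 < T₁ := hT₁.1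
  have hT₂pos : 0 < T₂ := hT₂.1
  -- continuity of both integrands on [ε, ω]
  have hcont : ∀ (c t : ℝ), 0 ≤ c → 0 < t → ContinuousOn
      (fun ξ => (1 / Real.sqrt (ξ ^ 2 + c)) * Real.tanh (Real.sqrt (ξ ^ 2 + c) / (2 * t)))
      (Set.uIcc ε ω) := by
    intro c t hc ht
    have hsqrt : ContinuousOn (fun ξ : ℝ => Real.sqrt (ξ ^ 2 + c)) (Set.uIcc ε ω) :=
      (Real.continuous_sqrt.comp ((continuous_pow 2).add continuous_const)).continuousOn
    have hne : ∀ ξ ∈ Set.uIcc ε ω, Real.sqrt (ξ ^ 2 + c) ≠ 0 := by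
      intro ξ hξ
      rw [Set.uIcc_of_le (le_of_lt hεω)] at hξ
      have hξpos : 0 < ξ := lt_of_lt_of_le hε hξ.1
      have : 0 < ξ ^ 2 + c := by positivity
      exact ne_of_gt (Real.sqrt_pos.mpr this)
    exact ((continuousOn_const.div hsqrt hne)).mul
      ((continuous_tanh'.comp_continuousOn (hsqrt.div_const _)))
  have hint₁ : IntervalIntegrable f₁ MeasureTheory.volume ε ω :=
    (hcont (Y T₁) T₁ hY₁nn hT₁pos).intervalIntegrable
  have hint₂ : IntervalIntegrable f₂ MeasureTheory.volume ε ω :=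
    (hcont (Y T₂) T₂ hY₂nn hT₂pos).intervalIntegrable
  -- pointwise strict inequality f₂ < f₁ on Ioo
  have hpt : ∀ ξ ∈ Set.Ioo ε ω, 0 < (f₁ - f₂) ξ := by
    intro ξ hξ
    have hξpos : 0 < ξ := lt_trans hε hξ.1
    have hs₁pos : 0 < Real.sqrt (ξ ^ 2 + Y T₁) := Real.sqrt_pos.mpr (by positivity)
    have hle : Real.sqrt (ξ ^ 2 + Y T₁) ≤ Real.sqrt (ξ ^ 2 + Y T₂) :=
      Real.sqrt_le_sqrt (by linarith)
    have := key_ineq hs₁pos hle hT₁pos hTT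
    simp only [Pi.sub_apply, hf₁, hf₂]
    rw [one_div, inv_mul_eq_div, one_div, inv_mul_eq_div] at *
    linarith
  have hpos : 0 < ∫ ξ in ε..ω, (f₁ - f₂) ξ :=
    intervalIntegral.intervalIntegral_pos_of_pos_on (hint₁.sub hint₂) hpt hεω
  simp only [Pi.sub_apply] at hpos
  rw [intervalIntegral.integral_sub hint₁ hint₂] at hpos
  -- but the two integrals are equal
  have h1 : U₁ * ∫ ξ in ε..ω, f₁ ξ = U₁ * ∫ ξ in ε..ω, f₂ ξ := by
    rw [← hEq₁, ← hEq₂]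
  have h2 : (∫ ξ in ε..ω, f₁ ξ) = ∫ ξ in ε..ω, f₂ ξ :=
    mul_left_cancel₀ (ne_of_gt hU) h1
  linarith
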